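/- Let k > 0 and let w_k be the unique real number w with -1 ≤ w < 0 satisfying w·exp(w) = -(k+1)·exp(-(k+1)). Then y = w_k + k + 1 is positive and is the unique positive solution of the equation y/(1 - exp(-y)) = k + 1. Consequently, at the price p3 = v - k - 1 (the border between Regions 2 and 3, where λ0 = 0 and v - p = k + 1), the equilibrium arrival rate in period 1 equals λ1 = w_k + k + 1 and the firm's profit equals π3 = (v - k - 1)·(1 - exp(-(w_k + k + 1))). -/

import Mathlib

private lemma hasDeriv_mul_exp (x : ℝ) :
    HasDerivAt (fun x => x * Real.exp x) ((1 + x) * Real.exp x) x := by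
  have h := (hasDerivAt_id x).mul (Real.hasDerivAt_exp x)
  exact h.congr_deriv (by simp only [id, one_mul]; ring)

private lemma strictMono_mul_exp : StrictMonoOn (fun x => x * Real.exp x) (Set.Ici (-1 : ℝ)) := by
  apply strictMonoOn_of_deriv_pos (convex_Ici _)
  · exact (continuous_id.mul Real.continuous_exp).continuousOn
  · intro x hx
    rw [interior_Ici] at hx
    rw [(hasDeriv_mul_exp x).deriv]
    have : 0 < 1 + x := by simp at hx; linarith
    positivity

private lemma strictAnti_mul_exp : StrictAntiOn (fun x => x * Real.exp x) (Set.Iic (-1 : ℝ)) := by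
  apply strictAntiOn_of_deriv_neg (convex_Iic _)
  · exact (continuous_id.mul Real.continuous_exp).continuousOn
  · intro x hx
    rw [interior_Iic] at hx
    rw [(hasDeriv_mul_exp x).deriv]
    have hx1 : 1 + x < 0 := by simp at hx; linarith
    have := Real.exp_pos x
    nlinarith

theorem stmt7 (k v w : ℝ) (hk : 0 < k) (hw1 : -1 ≤ w) (hw2 : w < 0)
    (hwe : w * Real.exp w = -(k + 1) * Real.exp (-(k + 1))) :
    0 < w + k + 1 ∧
    (w + k + 1) / (1 - Real.exp (-(w + k + 1))) = k + 1 ∧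
    (∀ y : ℝ, 0 < y → y / (1 - Real.exp (-y)) = k + 1 → y = w + k + 1) ∧
    (∀ l : ℝ, 0 < l → v - (v - k - 1) = l / (1 - Real.exp (-l)) →
      l = w + k + 1 ∧
      (v - k - 1) * (1 - Real.exp (-l)) =
        (v - k - 1) * (1 - Real.exp (-(w + k + 1)))) := by
  have hy : 0 < w + k + 1 := by linarith
  have hmul : Real.exp w * Real.exp (-w) = 1 := by rw [← Real.exp_add]; simp
  have hsplit : Real.exp (-(w + k + 1)) = Real.exp (-(k + 1)) * Real.exp (-w) := by
    rw [← Real.exp_add]; ring_nf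
  have hkey : (k + 1) * Real.exp (-(w + k + 1)) = -w := by
    rw [hsplit]
    have h2 : (k + 1) * Real.exp (-(k + 1)) = -(w * Real.exp w) := by linarith
    calc (k + 1) * (Real.exp (-(k + 1)) * Real.exp (-w))
        = ((k + 1) * Real.exp (-(k + 1))) * Real.exp (-w) := by ring
      _ = -(w * Real.exp w) * Real.exp (-w) := by rw [h2]
      _ = -w * (Real.exp w * Real.exp (-w)) := by ring
      _ = -w := by rw [hmul]; ring
  have hexp_lt : Real.exp (-(w + k + 1)) < 1 := Real.exp_lt_one_iff.mpr (by linarith)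
  have hne : 1 - Real.exp (-(w + k + 1)) ≠ 0 := by linarith
  have heq2 : (w + k + 1) / (1 - Real.exp (-(w + k + 1))) = k + 1 := by
    rw [div_eq_iff hne]
    nlinarith [hkey]
  have huniq : ∀ y : ℝ, 0 < y → y / (1 - Real.exp (-y)) = k + 1 → y = w + k + 1 := by
    intro y hy0 hyeq
    have hey : Real.exp (-y) < 1 := Real.exp_lt_one_iff.mpr (by linarith)
    have hney : 1 - Real.exp (-y) ≠ 0 := by linarith
    rw [div_eq_iff hney] at hyeq
    -- y = (k+1)(1 - exp(-y)), so (y-(k+1)) e^{y-(k+1)} = -(k+1)e^{-(k+1)} = w e^w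
    set u := y - (k + 1) with hu
    have hglue : u * Real.exp u = w * Real.exp w := by
      have h3 : u = -(k + 1) * Real.exp (-y) := by rw [hu]; nlinarith [hyeq]
      have h4 : Real.exp u = Real.exp y * Real.exp (-(k + 1)) := by
        rw [← Real.exp_add, hu]; ring_nf
      have h5 : Real.exp (-y) * Real.exp y = 1 := by rw [← Real.exp_add]; simp
      rw [hwe, h4, h3]
      calc -(k + 1) * Real.exp (-y) * (Real.exp y * Real.exp (-(k + 1)))
          = -(k + 1) * Real.exp (-(k + 1)) * (Real.exp (-y) * Real.exp y) := by ring
        _ = -(k + 1) * Real.exp (-(k + 1)) := by rw [h5]; ring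
    rcases le_or_gt (-1 : ℝ) u with hcase | hcase
    · have := strictMono_mul_exp.injOn (Set.mem_Ici.mpr hcase) (Set.mem_Ici.mpr hw1) hglue
      linarith [this]
    · exfalso
      have hk1 : -(k + 1) ∈ Set.Iic (-1 : ℝ) := by simp; linarith
      have hu1 : u ∈ Set.Iic (-1 : ℝ) := Set.mem_Iic.mpr (le_of_lt hcase)
      have hval : u * Real.exp u = -(k + 1) * Real.exp (-(k + 1)) := by rw [hglue, hwe]
      have := strictAnti_mul_exp.injOn hu1 hk1 hval
      have : y = 0 := by rw [hu] at this; linarith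
      linarith
  refine ⟨hy, heq2, huniq, ?_⟩
  intro l hl hleq
  have hl2 : l / (1 - Real.exp (-l)) = k + 1 := by linarith
  have := huniq l hl hl2
  exact ⟨this, by rw [this]⟩
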